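/- Let F be a distribution function on ℝ with F(0) = 0 and fix N ∈ ℕ. Then ∫_{(0, 1/e_{[N]}]} G_N(|log u|) dF(u) = ∫_{(0, 1/e_{[N]}]} F(u)·(−g_N(u)) du, where for u ∈ (0, 1/e_{[N]}], g_N(u) = −(1/u)·(log_{[N]}(−log u) + ∏_{j=1}^{N−1} 1/log_{[j]}(−log u)); both sides are finite or infinite simultaneously. -/

import Mathlib

/-- Tower of exponentials: `e_[0] = 1`, `e_[N] = exp (e_[N-1])`. -/
noncomputable def towerE : ℕ → ℝ
  | 0 => 1
  | n + 1 => Real.exp (towerE n)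

/-- `N`-fold iterated logarithm. -/
noncomputable def iterLog (N : ℕ) (t : ℝ) : ℝ := Real.log^[N] t

/-- `G_N(t) = 0` for `t ≤ e_[N-1]` and `G_N(t) = t · log_[N](t)` for `t > e_[N-1]`. -/
noncomputable def G (N : ℕ) (t : ℝ) : ℝ :=
  if t ≤ towerE (N - 1) then 0 else t * iterLog N t

/-- `-g_N(u)` for `u ∈ (0, 1/e_[N]]`, where
`g_N(u) = -(1/u)(log_[N](-log u) + ∏_{j=1}^{N-1} 1/log_[j](-log u))`. -/
noncomputable def negGN (N : ℕ) (u : ℝ) : ℝ :=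
  (1 / u) * (iterLog N (-Real.log u) +
    ∏ j ∈ Finset.Icc 1 (N - 1), (iterLog j (-Real.log u))⁻¹)

open Real Set MeasureTheory Filter
open scoped ENNReal

lemma towerE_pos (n : ℕ) : 0 < towerE n := by
  cases n with
  | zero => norm_num [towerE]
  | succ n => exact Real.exp_pos _

lemma one_le_towerE (n : ℕ) : 1 ≤ towerE n := by
  cases n with
  | zero => norm_num [towerE]
  | succ n => exact Real.one_le_exp (towerE_pos n).le

lemma towerE_mono : Monotone towerE := by
  apply monotone_nat_of_le_succ
  intro n
  have := Real.add_one_le_exp (towerE n)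
  show towerE n ≤ Real.exp (towerE n)
  linarith

lemma iterLog_zero_apply (t : ℝ) : iterLog 0 t = t := rfl

lemma iterLog_succ' (n : ℕ) (t : ℝ) : iterLog (n + 1) t = iterLog n (Real.log t) :=
  Function.iterate_succ_apply Real.log n t

lemma iterLog_succ (n : ℕ) (t : ℝ) : iterLog (n + 1) t = Real.log (iterLog n t) :=
  Function.iterate_succ_apply' Real.log n t

lemma one_le_iterLog : ∀ (k : ℕ) {s : ℝ}, towerE k ≤ s → 1 ≤ iterLog k s
  | 0, s, h => h
  | (k + 1), s, h => by
      have hs0 : (0:ℝ) < s := lt_of_lt_of_le (towerE_pos _) h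
      have : towerE k ≤ Real.log s :=
        (Real.le_log_iff_exp_le hs0).2 h
      rw [iterLog_succ']
      exact one_le_iterLog k this

lemma iterLog_pos {N : ℕ} {s : ℝ} (hs : towerE (N - 1) ≤ s) :
    ∀ j, j < N → 0 < iterLog j s := by
  intro j hj
  have h1 : towerE j ≤ towerE (N - 1) := towerE_mono (by omega)
  linarith [one_le_iterLog j (le_trans h1 hs)]

lemma iterLog_towerE : ∀ k : ℕ, iterLog (k + 1) (towerE k) = 0
  | 0 => by simp [iterLog, towerE]
  | (k + 1) => by
      rw [iterLog_succ']
      show iterLog (k + 1) (Real.log (Real.exp (towerE k))) = 0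
      rw [Real.log_exp]
      exact iterLog_towerE k

lemma measurable_iterLog (k : ℕ) : Measurable (iterLog k) := by
  induction k with
  | zero => exact measurable_id
  | succ k ih =>
    have h : iterLog (k + 1) = iterLog k ∘ Real.log := by
      funext t; exact iterLog_succ' k t
    rw [h]; exact ih.comp Real.measurable_log

lemma measurable_negGN (N : ℕ) : Measurable (negGN N) := by
  unfold negGN
  apply Measurable.mul
  · exact measurable_const.div measurable_id
  · apply Measurable.add
    · exact (measurable_iterLog N).comp Real.measurable_log.neg
    · exact Finset.measurable_prod _ fun j _ =>
        ((measurable_iterLog j).comp Real.measurable_log.neg).inv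

lemma continuousAt_iterLog : ∀ (k : ℕ) {s : ℝ}, (∀ j, j < k → iterLog j s ≠ 0) →
    ContinuousAt (iterLog k) s
  | 0, s, _ => continuousAt_id
  | (k + 1), s, h => by
      have h0 : s ≠ 0 := h 0 (Nat.succ_pos k)
      have heq : iterLog (k + 1) = iterLog k ∘ Real.log := by
        funext t; exact iterLog_succ' k t
      rw [heq]
      have hh : ∀ j, j < k → iterLog j (Real.log s) ≠ 0 := by
        intro j hj; rw [← iterLog_succ']; exact h (j + 1) (by omega)
      exact (continuousAt_iterLog k hh).comp (Real.continuousAt_log h0)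

lemma hasDerivAt_iterLog : ∀ (k : ℕ) {s : ℝ}, (∀ j, j < k → 0 < iterLog j s) →
    HasDerivAt (iterLog k) (∏ j ∈ Finset.range k, (iterLog j s)⁻¹) s
  | 0, s, _ => by simp only [Finset.range_zero, Finset.prod_empty]; exact hasDerivAt_id s
  | (k + 1), s, h => by
      have hs : s ≠ 0 := ne_of_gt (h 0 (Nat.succ_pos k))
      have hlog : HasDerivAt Real.log s⁻¹ s := Real.hasDerivAt_log hs
      have hh : ∀ j, j < k → 0 < iterLog j (Real.log s) := by
        intro j hj; rw [← iterLog_succ']; exact h (j + 1) (by omega)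
      have hcomp := (hasDerivAt_iterLog k hh).comp s hlog
      have heq : iterLog k ∘ Real.log = iterLog (k + 1) := by
        funext t; exact (iterLog_succ' k t).symm
      rw [heq] at hcomp
      refine hcomp.congr_deriv ?_
      rw [Finset.prod_range_succ']; rfl

lemma continuousAt_finprod {ι : Type*} (s : Finset ι) (f : ι → ℝ → ℝ) {x : ℝ}
    (h : ∀ j ∈ s, ContinuousAt (f j) x) :
    ContinuousAt (fun y => ∏ j ∈ s, f j y) x := by
  induction s using Finset.cons_induction with
  | empty => simpa using continuousAt_const
  | cons a s ha ih =>
    simp only [Finset.prod_cons]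
    exact (h a (Finset.mem_cons_self a s)).mul
      (ih fun j hj => h j (Finset.mem_cons.2 (Or.inr hj)))

lemma negGN_nonneg (N : ℕ) (hN : 1 ≤ N) {u : ℝ} (h0 : 0 < u)
    (hs : towerE (N - 1) ≤ -Real.log u) : 0 ≤ negGN N u := by
  have hpos := iterLog_pos hs
  have h1 : 0 ≤ iterLog N (-Real.log u) := by
    obtain ⟨m, rfl⟩ : ∃ m, N = m + 1 := ⟨N - 1, (Nat.succ_pred_eq_of_pos hN).symm⟩
    rw [iterLog_succ]
    exact Real.log_nonneg (one_le_iterLog m (by simpa using hs))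
  have h2 : 0 ≤ ∏ j ∈ Finset.Icc 1 (N - 1), (iterLog j (-Real.log u))⁻¹ := by
    apply Finset.prod_nonneg
    intro j hj
    have := hpos j (by have := Finset.mem_Icc.1 hj; omega)
    positivity
  have : (0:ℝ) ≤ 1 / u := by positivity
  unfold negGN
  positivity

lemma continuousAt_negGN (N : ℕ) {u : ℝ} (h0 : 0 < u)
    (hs : towerE (N - 1) ≤ -Real.log u) : ContinuousAt (negGN N) u := by
  have hlog : ContinuousAt (fun u : ℝ => -Real.log u) u :=
    (Real.continuousAt_log h0.ne').neg
  have hpos := iterLog_pos hs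
  unfold negGN
  apply ContinuousAt.mul
  · exact continuousAt_const.div continuousAt_id h0.ne'
  · apply ContinuousAt.add
    · exact ContinuousAt.comp (g := iterLog N) (f := fun u : ℝ => -Real.log u)
        (continuousAt_iterLog N fun j hj => (hpos j hj).ne') hlog
    · have : ContinuousAt
          (fun s : ℝ => ∏ j ∈ Finset.Icc 1 (N - 1), (iterLog j s)⁻¹) (-Real.log u) := by
        apply continuousAt_finprod
        intro j hj
        have hjN : j < N := by have := Finset.mem_Icc.1 hj; omega
        exact (continuousAt_iterLog j fun i hi =>
          (hpos i (lt_trans hi hjN)).ne').inv₀ (hpos j hjN).ne'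
      exact ContinuousAt.comp (f := fun u : ℝ => -Real.log u) this hlog

lemma G_eq (N : ℕ) (hN : 1 ≤ N) {s : ℝ} (hs : towerE (N - 1) ≤ s) :
    G N s = s * iterLog N s := by
  unfold G
  rcases lt_or_eq_of_le hs with h | h
  · rw [if_neg (not_le.2 h)]
  · rw [← h, if_pos le_rfl]
    obtain ⟨m, rfl⟩ : ∃ m, N = m + 1 := ⟨N - 1, (Nat.succ_pred_eq_of_pos hN).symm⟩
    simp [iterLog_towerE]

lemma hasDerivAt_phi (N : ℕ) (hN : 1 ≤ N) {t : ℝ} (h0 : 0 < t)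
    (hs : towerE (N - 1) < -Real.log t) :
    HasDerivAt (fun t => (-Real.log t) * iterLog N (-Real.log t)) (-negGN N t) t := by
  have hs1 : (1:ℝ) ≤ -Real.log t := le_trans (one_le_towerE _) hs.le
  have hs0 : -Real.log t ≠ 0 := by linarith
  have hneg : HasDerivAt (fun t : ℝ => -Real.log t) (-t⁻¹) t :=
    (Real.hasDerivAt_log h0.ne').neg
  have hpos := iterLog_pos hs.le
  have hcomp : HasDerivAt (fun t => iterLog N (-Real.log t))
      ((∏ j ∈ Finset.range N, (iterLog j (-Real.log t))⁻¹) * (-t⁻¹)) t :=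
    (hasDerivAt_iterLog N hpos).comp t hneg
  have hmul := hneg.mul hcomp
  refine hmul.congr_deriv ?_
  have hprod : (-Real.log t) * (∏ j ∈ Finset.range N, (iterLog j (-Real.log t))⁻¹)
      = ∏ j ∈ Finset.Icc 1 (N - 1), (iterLog j (-Real.log t))⁻¹ := by
    obtain ⟨m, rfl⟩ : ∃ m, N = m + 1 := ⟨N - 1, (Nat.succ_pred_eq_of_pos hN).symm⟩
    rw [Finset.prod_range_succ']
    have h1 : Finset.Icc 1 (m + 1 - 1) = Finset.Ico 1 (m + 1) := by
      rw [Finset.Ico_add_one_right_eq_Icc]; simp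
    rw [h1, Finset.prod_Ico_eq_prod_range]
    have h2 : ∀ i ∈ Finset.range m, (iterLog (i + 1) (-Real.log t))⁻¹
        = (iterLog (1 + i) (-Real.log t))⁻¹ := by
      intro i _; rw [add_comm]
    rw [Finset.prod_congr rfl h2]
    have : (m + 1 - 1) = m := rfl
    rw [this]
    show (-Real.log t) * ((∏ i ∈ Finset.range m, (iterLog (1+i) (-Real.log t))⁻¹) * (-Real.log t)⁻¹)
      = ∏ i ∈ Finset.range m, (iterLog (1 + i) (-Real.log t))⁻¹
    rw [mul_comm (∏ i ∈ Finset.range m, (iterLog (1+i) (-Real.log t))⁻¹) (-Real.log t)⁻¹,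
      ← mul_assoc, mul_inv_cancel₀ hs0, one_mul]
  have hG : -negGN N t = -t⁻¹ * (iterLog N (-Real.log t)
      + ∏ j ∈ Finset.Icc 1 (N - 1), (iterLog j (-Real.log t))⁻¹) := by
    unfold negGN; ring
  rw [hG, ← hprod]
  ring

lemma log_towerE_inv (N : ℕ) (hN : 1 ≤ N) :
    Real.log (towerE N)⁻¹ = -towerE (N - 1) := by
  obtain ⟨m, rfl⟩ : ∃ m, N = m + 1 := ⟨N - 1, (Nat.succ_pred_eq_of_pos hN).symm⟩
  rw [Real.log_inv]
  show -Real.log (Real.exp (towerE m)) = -towerE (m + 1 - 1)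
  rw [Real.log_exp]; simp

lemma mem_neg_log (N : ℕ) (hN : 1 ≤ N) {t : ℝ} (h0 : 0 < t)
    (htb : t ≤ (towerE N)⁻¹) : towerE (N - 1) ≤ -Real.log t := by
  have := Real.log_le_log h0 htb
  rw [log_towerE_inv N hN] at this
  linarith

lemma mem_neg_log_lt (N : ℕ) (hN : 1 ≤ N) {t : ℝ} (h0 : 0 < t)
    (htb : t < (towerE N)⁻¹) : towerE (N - 1) < -Real.log t := by
  have := Real.log_lt_log h0 htb
  rw [log_towerE_inv N hN] at this
  linarith

lemma integral_negGN (N : ℕ) (hN : 1 ≤ N) {u : ℝ} (hu : 0 < u)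
    (hub : u ≤ (towerE N)⁻¹) :
    ∫ t in u..(towerE N)⁻¹, negGN N t = G N |Real.log u| := by
  set b : ℝ := (towerE N)⁻¹ with hbdef
  set φ : ℝ → ℝ := fun t => (-Real.log t) * iterLog N (-Real.log t) with hφ
  have hmem : ∀ t ∈ Set.Icc u b, 0 < t ∧ towerE (N - 1) ≤ -Real.log t := by
    intro t ht
    have h0 : 0 < t := lt_of_lt_of_le hu ht.1
    exact ⟨h0, mem_neg_log N hN h0 ht.2⟩
  have hcont : ContinuousOn φ (Set.Icc u b) := by
    intro t ht
    obtain ⟨h0, hs⟩ := hmem t ht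
    have hpos := iterLog_pos hs
    have hlog : ContinuousAt (fun t : ℝ => -Real.log t) t :=
      (Real.continuousAt_log h0.ne').neg
    exact (hlog.mul (ContinuousAt.comp (g := iterLog N) (f := fun u : ℝ => -Real.log u)
      (continuousAt_iterLog N fun j hj => (hpos j hj).ne') hlog)).continuousWithinAt
  have hderiv : ∀ t ∈ Set.Ioo u b, HasDerivWithinAt φ (-negGN N t) (Set.Ioi t) t := by
    intro t ht
    have h0 : 0 < t := lt_trans hu ht.1
    exact (hasDerivAt_phi N hN h0 (mem_neg_log_lt N hN h0 ht.2)).hasDerivWithinAt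
  have hint : IntervalIntegrable (fun t => -negGN N t) MeasureTheory.volume u b := by
    apply ContinuousOn.intervalIntegrable
    rw [Set.uIcc_of_le hub]
    intro t ht
    obtain ⟨h0, hs⟩ := hmem t ht
    exact ((continuousAt_negGN N h0 hs).neg).continuousWithinAt
  have hftc := intervalIntegral.integral_eq_sub_of_hasDeriv_right_of_le hub hcont hderiv hint
  have hφb : φ b = 0 := by
    obtain ⟨m, rfl⟩ : ∃ m, N = m + 1 := ⟨N - 1, (Nat.succ_pred_eq_of_pos hN).symm⟩
    have : -Real.log b = towerE m := by
      rw [hbdef, log_towerE_inv (m + 1) hN]; simp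
    rw [hφ]
    simp only [this]
    rw [iterLog_towerE m, mul_zero]
  have hneg : ∫ t in u..b, negGN N t = φ u := by
    have : ∫ t in u..b, -negGN N t = -∫ t in u..b, negGN N t := intervalIntegral.integral_neg
    rw [this, hφb] at hftc
    linarith
  rw [hneg]
  have hlogu : |Real.log u| = -Real.log u := by
    have h1 : Real.log u ≤ -towerE (N - 1) := by
      have := mem_neg_log N hN hu hub; linarith
    have h2 : (1:ℝ) ≤ towerE (N - 1) := one_le_towerE _
    exact abs_of_neg (by linarith)
  rw [hlogu, G_eq N hN (mem_neg_log N hN hu hub), hφ]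

/-- Integration-by-parts identity near zero:
`∫_{(0,1/e_[N]]} G_N(|log u|) dF(u) = ∫_{(0,1/e_[N]]} F(u)·(-g_N(u)) du` for a
distribution function `F` with `F(0) = 0`; both nonnegative integrals are
simultaneously finite or infinite. -/
theorem stieltjes_ibp_lower (N : ℕ) (hN : 1 ≤ N) (F : StieltjesFunction ℝ)
    (hF0 : F 0 = 0) (hF1 : Filter.Tendsto F Filter.atTop (nhds 1))
    (hFnonneg : ∀ u : ℝ, 0 ≤ F u) :
    ∫⁻ u in Set.Ioc (0 : ℝ) (towerE N)⁻¹,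
        ENNReal.ofReal (G N |Real.log u|) ∂F.measure
      = ∫⁻ u in Set.Ioc (0 : ℝ) (towerE N)⁻¹,
        ENNReal.ofReal (F u * negGN N u) := by
  set b : ℝ := (towerE N)⁻¹ with hbdef
  have hb0 : 0 < b := inv_pos.2 (towerE_pos N)
  set f : ℝ → ℝ≥0∞ := fun t => ENNReal.ofReal (negGN N t) with hfdef
  have hfm : Measurable f := (measurable_negGN N).ennreal_ofReal
  -- Step 1 : pointwise identity via FTC
  have key : ∀ u ∈ Set.Ioc (0:ℝ) b,
      ENNReal.ofReal (G N |Real.log u|) = ∫⁻ t in Set.Ioc u b, f t := by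
    intro u hu
    have hcontOn : ContinuousOn (negGN N) (Set.Icc u b) := by
      intro t ht
      have h0 : 0 < t := lt_of_lt_of_le hu.1 ht.1
      exact (continuousAt_negGN N h0 (mem_neg_log N hN h0 ht.2)).continuousWithinAt
    have hInt : MeasureTheory.IntegrableOn (negGN N) (Set.Ioc u b) MeasureTheory.volume :=
      (hcontOn.integrableOn_Icc).mono_set Set.Ioc_subset_Icc_self
    have hnn : 0 ≤ᵐ[MeasureTheory.volume.restrict (Set.Ioc u b)] negGN N := by
      filter_upwards [MeasureTheory.ae_restrict_mem measurableSet_Ioc] with t ht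
      have h0 : 0 < t := lt_trans hu.1 ht.1
      exact negGN_nonneg N hN h0 (mem_neg_log N hN h0 ht.2)
    rw [hfdef, ← MeasureTheory.ofReal_integral_eq_lintegral_ofReal hInt hnn]
    congr 1
    rw [← intervalIntegral.integral_of_le hu.2]
    exact (integral_negGN N hN hu.1 hu.2).symm
  haveI hfin : MeasureTheory.IsFiniteMeasure (F.measure.restrict (Set.Ioc (0:ℝ) b)) := by
    constructor
    rw [MeasureTheory.Measure.restrict_apply_univ, F.measure_Ioc]
    exact ENNReal.ofReal_lt_top
  have hmeas2 : AEMeasurable (Function.uncurry fun u t => (Set.Ico u b).indicator f t)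
      ((F.measure.restrict (Set.Ioc (0:ℝ) b)).prod
        (MeasureTheory.volume.restrict (Set.Ioc (0:ℝ) b))) := by
    have heq : (Function.uncurry fun u t => (Set.Ico u b).indicator f t)
        = Set.indicator {p : ℝ × ℝ | p.1 ≤ p.2 ∧ p.2 < b} (fun p => f p.2) := by
      funext p
      simp only [Function.uncurry, Set.indicator_apply, Set.mem_Ico, Set.mem_setOf_eq]
    rw [heq]
    have hS : MeasurableSet {p : ℝ × ℝ | p.1 ≤ p.2 ∧ p.2 < b} := by
      have : {p : ℝ × ℝ | p.1 ≤ p.2 ∧ p.2 < b}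
          = {p : ℝ × ℝ | p.1 ≤ p.2} ∩ (Prod.snd ⁻¹' Set.Iio b) := rfl
      rw [this]
      exact (measurableSet_le measurable_fst measurable_snd).inter
        (measurable_snd measurableSet_Iio)
    exact ((hfm.comp measurable_snd).indicator hS).aemeasurable
  calc ∫⁻ u in Set.Ioc (0:ℝ) b, ENNReal.ofReal (G N |Real.log u|) ∂F.measure
      = ∫⁻ u in Set.Ioc (0:ℝ) b, (∫⁻ t in Set.Ioc u b, f t) ∂F.measure := by
        apply MeasureTheory.setLIntegral_congr_fun measurableSet_Ioc
        exact key
    _ = ∫⁻ u in Set.Ioc (0:ℝ) b,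
          (∫⁻ t in Set.Ioc (0:ℝ) b, (Set.Ico u b).indicator f t) ∂F.measure := by
        apply MeasureTheory.setLIntegral_congr_fun measurableSet_Ioc
        intro u hu
        dsimp only
        rw [MeasureTheory.lintegral_indicator measurableSet_Ico,
          MeasureTheory.Measure.restrict_restrict measurableSet_Ico]
        have h1 : Set.Ico u b ∩ Set.Ioc (0:ℝ) b = Set.Ico u b :=
          Set.inter_eq_self_of_subset_left fun t ht => ⟨lt_of_lt_of_le hu.1 ht.1, ht.2.le⟩
        rw [h1, MeasureTheory.Measure.restrict_congr_set (MeasureTheory.Ioo_ae_eq_Ioc.symm.trans MeasureTheory.Ioo_ae_eq_Ico)]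
    _ = ∫⁻ t in Set.Ioc (0:ℝ) b,
          (∫⁻ u in Set.Ioc (0:ℝ) b, (Set.Ico u b).indicator f t ∂F.measure) := by
        exact MeasureTheory.lintegral_lintegral_swap hmeas2
    _ = ∫⁻ t in Set.Ioc (0:ℝ) b, ENNReal.ofReal (F t * negGN N t) := by
        apply MeasureTheory.lintegral_congr_ae
        have hbne : ∀ᵐ t ∂(MeasureTheory.volume.restrict (Set.Ioc (0:ℝ) b)), t ≠ b := by
          apply MeasureTheory.ae_restrict_of_ae
          rw [MeasureTheory.ae_iff]
          have : {t : ℝ | ¬ t ≠ b} = {b} := by ext t; simp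
          rw [this]
          exact MeasureTheory.measure_singleton b
        filter_upwards [MeasureTheory.ae_restrict_mem measurableSet_Ioc, hbne] with t ht htb
        have htb' : t < b := lt_of_le_of_ne ht.2 htb
        have hind : (fun u => (Set.Ico u b).indicator f t)
            = fun u => (Set.Iic t).indicator (fun _ => f t) u := by
          funext u
          by_cases h : u ≤ t
          · simp [Set.indicator_apply, Set.mem_Ico, Set.mem_Iic, h, htb']
          · simp [Set.indicator_apply, Set.mem_Ico, Set.mem_Iic, h]
        rw [hind, MeasureTheory.lintegral_indicator measurableSet_Iic,
          MeasureTheory.Measure.restrict_restrict measurableSet_Iic]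
        have h2 : Set.Iic t ∩ Set.Ioc (0:ℝ) b = Set.Ioc (0:ℝ) t := by
          ext v
          simp only [Set.mem_inter_iff, Set.mem_Iic, Set.mem_Ioc]
          constructor
          · rintro ⟨h1, h2, h3⟩; exact ⟨h2, h1⟩
          · rintro ⟨h1, h2⟩; exact ⟨h2, h1, le_trans h2 ht.2⟩
        rw [h2, MeasureTheory.lintegral_const, MeasureTheory.Measure.restrict_apply_univ,
          F.measure_Ioc, hF0, sub_zero, hfdef]
        rw [← ENNReal.ofReal_mul (negGN_nonneg N hN ht.1 (mem_neg_log N hN ht.1 ht.2))]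
        rw [mul_comm]
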